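/- Let S be a monoid. Every simple S-act is cancellable: if A is an S-act whose only subact is A itself, and B, C are S-acts with A ⊔ B ≅ A ⊔ C, then B ≅ C. -/

import Mathlib

universe u v w

/-- A right `S`-act structure on a type `A`: a map `A × S → A`, `(a, s) ↦ a · s`,
with `a · 1 = a` and `a · (s*t) = (a · s) · t`. (`S`-acts are additionally required
to be nonempty; this is imposed via `Nonempty` hypotheses.) -/
class RAct (S : Type u) [Monoid S] (A : Type v) : Type (max u v) where
  act : A → S → A
  act_one : ∀ a : A, act a 1 = a
  act_mul : ∀ (a : A) (s t : S), act a (s * t) = act (act a s) t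

/-- Isomorphism of `S`-acts: a bijective action-preserving map. -/
def ActIso (S : Type u) [Monoid S] (A : Type v) (B : Type w) [RAct S A] [RAct S B] : Prop :=
  ∃ e : A ≃ B, ∀ (a : A) (s : S), e (RAct.act a s) = RAct.act (e a) s

/-- The coproduct (disjoint union) of two `S`-acts, with componentwise action. -/
instance sumRAct (S : Type u) [Monoid S] (A : Type v) (B : Type w) [RAct S A] [RAct S B] :
    RAct S (A ⊕ B) where
  act x s := Sum.map (fun a => RAct.act a s) (fun b => RAct.act b s) x
  act_one := by rintro (a | b) <;> simp [RAct.act_one]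
  act_mul := by rintro (a | b) s t <;> simp [RAct.act_mul]

/-- An `S`-act `A` is cancellable if `A ⊔ B ≅ A ⊔ C` implies `B ≅ C`
for all `S`-acts `B`, `C`. -/
def Cancellable (S : Type u) [Monoid S] (A : Type u) [RAct S A] : Prop :=
  ∀ (B C : Type u) [RAct S B] [RAct S C] [Nonempty B] [Nonempty C],
    ActIso S (A ⊕ B) (A ⊕ C) → ActIso S B C

/-- A subact of an `S`-act: a nonempty subset closed under the action. -/
def IsSubact (S : Type u) [Monoid S] {A : Type v} [RAct S A] (T : Set A) : Prop :=
  T.Nonempty ∧ ∀ a ∈ T, ∀ s : S, RAct.act a s ∈ T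

/-- Every simple `S`-act (whose only subact is itself) is cancellable. -/
theorem simple_cancellable (S : Type u) [Monoid S] (A : Type u) [RAct S A] [Nonempty A]
    (hA : ∀ T : Set A, IsSubact S T → T = Set.univ)
    (B C : Type u) [RAct S B] [RAct S C] [Nonempty B] [Nonempty C]
    (h : ActIso S (A ⊕ B) (A ⊕ C)) : ActIso S B C := by
  classical
  obtain ⟨e, he⟩ := h
  have hes : ∀ (x : A ⊕ C) (s : S), e.symm (RAct.act x s) = RAct.act (e.symm x) s := by
    intro x s
    conv_lhs => rw [← e.apply_symm_apply x]
    rw [← he, e.symm_apply_apply]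
  have key : ∀ {Y Z : Type u} [RAct S Y] [RAct S Z] (f : A → Y ⊕ Z),
      (∀ (a : A) (s : S), f (RAct.act a s) = RAct.act (f a) s) →
      (∀ a, ∃ y, f a = Sum.inl y) ∨ (∀ a, ∃ z, f a = Sum.inr z) := by
    intro Y Z _ _ f hf
    by_cases hne : ∃ a y, f a = Sum.inl y
    · left
      obtain ⟨a0, y0, h0⟩ := hne
      have hT : IsSubact S {a : A | ∃ y, f a = Sum.inl y} := by
        refine ⟨⟨a0, y0, h0⟩, ?_⟩
        rintro a ⟨y, hy⟩ s
        exact ⟨RAct.act y s, by rw [hf, hy]; rfl⟩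
      have hu := hA _ hT
      intro a
      exact Set.eq_univ_iff_forall.mp hu a
    · right
      push_neg at hne
      intro a
      cases hfa : f a with
      | inl y => exact absurd hfa (hne a y)
      | inr z => exact ⟨z, rfl⟩
  have hf1 : ∀ (a : A) (s : S),
      (fun a => e (Sum.inl a)) (RAct.act a s) = RAct.act ((fun a => e (Sum.inl a)) a) s := by
    intro a s; exact he (Sum.inl a) s
  have hf2 : ∀ (a : A) (s : S),
      (fun a => e.symm (Sum.inl a)) (RAct.act a s)
        = RAct.act ((fun a => e.symm (Sum.inl a)) a) s := by
    intro a s; exact hes (Sum.inl a) s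
  rcases key (fun a => e (Sum.inl a)) hf1 with hL | hR
  · -- e maps A into A
    have hL' : ∀ a, ∃ a', e.symm (Sum.inl a) = Sum.inl a' := by
      rcases key (fun a => e.symm (Sum.inl a)) hf2 with hL' | hR'
      · exact hL'
      · exfalso
        obtain a := Classical.arbitrary A
        obtain ⟨a', ha'⟩ := hL a
        obtain ⟨b, hb⟩ := hR' a'
        have : e.symm (Sum.inl a') = Sum.inl a := by rw [← ha', e.symm_apply_apply]
        rw [this] at hb; exact Sum.inl_ne_inr hb
    have hB : ∀ b : B, ∃ c : C, e (Sum.inr b) = Sum.inr c := by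
      intro b
      cases hb : e (Sum.inr b) with
      | inl a' =>
        exfalso
        obtain ⟨a'', ha''⟩ := hL' a'
        have : e.symm (Sum.inl a') = Sum.inr b := by rw [← hb, e.symm_apply_apply]
        rw [this] at ha''; exact Sum.inr_ne_inl ha''
      | inr c => exact ⟨c, rfl⟩
    have hC : ∀ c : C, ∃ b : B, e.symm (Sum.inr c) = Sum.inr b := by
      intro c
      cases hc : e.symm (Sum.inr c) with
      | inl a =>
        exfalso
        obtain ⟨a', ha'⟩ := hL a
        have : e (Sum.inl a) = Sum.inr c := by rw [← hc, e.apply_symm_apply]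
        rw [this] at ha'; exact Sum.inr_ne_inl ha'
      | inr b => exact ⟨b, rfl⟩
    refine ⟨⟨fun b => Classical.choose (hB b), fun c => Classical.choose (hC c), ?_, ?_⟩, ?_⟩
    · intro b
      have h1 := Classical.choose_spec (hB b)
      have h2 := Classical.choose_spec (hC (Classical.choose (hB b)))
      have : e.symm (Sum.inr (Classical.choose (hB b))) = Sum.inr b := by
        rw [← h1, e.symm_apply_apply]
      exact Sum.inr.inj (h2.symm.trans this)
    · intro c
      have h1 := Classical.choose_spec (hC c)
      have h2 := Classical.choose_spec (hB (Classical.choose (hC c)))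
      have : e (Sum.inr (Classical.choose (hC c))) = Sum.inr c := by
        rw [← h1, e.apply_symm_apply]
      exact Sum.inr.inj (h2.symm.trans this)
    · intro b s
      have h1 := Classical.choose_spec (hB b)
      have h2 := Classical.choose_spec (hB (RAct.act b s))
      have h3 : e (Sum.inr (RAct.act b s)) = Sum.inr (RAct.act (Classical.choose (hB b)) s) := by
        have := he (Sum.inr b) s
        rw [h1] at this
        exact this
      exact (Sum.inr.inj (h3.symm.trans h2)).symm
  · -- e maps A into C
    have hR' : ∀ a, ∃ b, e.symm (Sum.inl a) = Sum.inr b := by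
      rcases key (fun a => e.symm (Sum.inl a)) hf2 with hL' | hR'
      · exfalso
        obtain a := Classical.arbitrary A
        obtain ⟨a', ha'⟩ := hL' a
        obtain ⟨c, hc⟩ := hR a'
        have : e (Sum.inl a') = Sum.inl a := by rw [← ha', e.apply_symm_apply]
        rw [this] at hc; exact Sum.inl_ne_inr hc
      · exact hR'
    -- the maps
    set g : B → C := fun b =>
      Sum.elim (fun a => Classical.choose (hR a)) id (e (Sum.inr b)) with hg
    set g' : C → B := fun c =>
      Sum.elim (fun a => Classical.choose (hR' a)) id (e.symm (Sum.inr c)) with hg'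
    refine ⟨⟨g, g', ?_, ?_⟩, ?_⟩
    · intro b
      cases hb : e (Sum.inr b) with
      | inl a =>
        have hgb : g b = Classical.choose (hR a) := by rw [hg]; simp [hb]
        have hc := Classical.choose_spec (hR a)
        have hsymm : e.symm (Sum.inr (Classical.choose (hR a))) = Sum.inl a := by
          rw [← hc, e.symm_apply_apply]
        have hsymm2 : e.symm (Sum.inl a) = Sum.inr b := by
          rw [← hb, e.symm_apply_apply]
        have hb' := Classical.choose_spec (hR' a)
        have hgg : g' (g b) = Classical.choose (hR' a) := by
          rw [hgb, hg']; simp [hsymm]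
        rw [hgg]
        exact Sum.inr.inj (hb'.symm.trans hsymm2)
      | inr c =>
        have hgb : g b = c := by rw [hg]; simp [hb]
        have hsymm : e.symm (Sum.inr c) = Sum.inr b := by rw [← hb, e.symm_apply_apply]
        rw [hgb, hg']; simp [hsymm]
    · intro c
      cases hc : e.symm (Sum.inr c) with
      | inl a =>
        have hgc : g' c = Classical.choose (hR' a) := by rw [hg']; simp [hc]
        have hb := Classical.choose_spec (hR' a)
        have hsymm : e (Sum.inr (Classical.choose (hR' a))) = Sum.inl a := by
          rw [← hb, e.apply_symm_apply]
        have hsymm2 : e (Sum.inl a) = Sum.inr c := by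
          rw [← hc, e.apply_symm_apply]
        have hc' := Classical.choose_spec (hR a)
        have hgg : g (g' c) = Classical.choose (hR a) := by
          rw [hgc, hg]; simp [hsymm]
        rw [hgg]
        exact Sum.inr.inj (hc'.symm.trans hsymm2)
      | inr b =>
        have hgc : g' c = b := by rw [hg']; simp [hc]
        have hsymm : e (Sum.inr b) = Sum.inr c := by rw [← hc, e.apply_symm_apply]
        rw [hgc, hg]; simp [hsymm]
    · intro b s
      have hact := he (Sum.inr b) s
      cases hb : e (Sum.inr b) with
      | inl a =>
        have hgb : g b = Classical.choose (hR a) := by simp [hg, hb]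
        have h4 : e (Sum.inr (RAct.act b s)) = Sum.inl (RAct.act a s) := by
          rw [hb] at hact; exact hact
        have h5 := Classical.choose_spec (hR (RAct.act a s))
        have h6 : e (Sum.inl (RAct.act a s))
            = Sum.inr (RAct.act (Classical.choose (hR a)) s) := by
          have := he (Sum.inl a) s
          rw [Classical.choose_spec (hR a)] at this
          exact this
        show g (RAct.act b s) = RAct.act (g b) s
        rw [hgb, hg]; simp only [h4, Sum.elim_inl]
        exact Sum.inr.inj (h5.symm.trans h6)
      | inr c =>
        have hgb : g b = c := by simp [hg, hb]
        have h4 : e (Sum.inr (RAct.act b s)) = Sum.inr (RAct.act c s) := by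
          rw [hb] at hact; exact hact
        show g (RAct.act b s) = RAct.act (g b) s
        rw [hgb, hg]; simp [h4]
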